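/- The function h_α(s) = R_{α,n}(s)/W_n(β), where R_{α,n}(s) = (1−s_1)^{−α}(s_1−s_2)^{−α}⋯(s_{n−1}−s_n)^{−α} and W_n(β) = Γ(β)^n/Γ(1+nβ), is a probability density on the simplex S(n): it is nonnegative and integrates to 1 over S(n). -/

import Mathlib

open MeasureTheory

/-- The kernel `R_{α,n}(s) = (1-s_1)^{-α}(s_1-s_2)^{-α}⋯(s_{n-1}-s_n)^{-α}` on the
ordered simplex, with `α = 1-β`. -/
noncomputable def singularKernel (β : ℝ) {n : ℕ} (s : Fin (n + 1) → ℝ) : ℝ :=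
  ∏ i : Fin (n + 1),
    ((if h : (i : ℕ) = 0 then 1
      else s ⟨(i : ℕ) - 1, by have := i.isLt; omega⟩) - s i) ^ (-(1 - β))

namespace PolyBeta

open Real Set


lemma beta_intble {a b c d : ℝ} (ha : 0 < a) (hb : 0 < b) (hcd : c < d) :
    IntervalIntegrable (fun x => (d - x) ^ (a - 1) * (x - c) ^ (b - 1)) volume c d := by
  set m := (c + d) / 2 with hm
  have hcm : c < m := by simp [hm]; linarith
  have hmd : m < d := by simp [hm]; linarith
  have h1 : IntervalIntegrable (fun x => (x - c) ^ (b - 1)) volume c m := by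
    have := (intervalIntegral.intervalIntegrable_rpow' (a := 0) (b := m - c)
      (r := b - 1) (by linarith)).comp_sub_right c
    simpa using this
  have h2 : IntervalIntegrable (fun x => (d - x) ^ (a - 1)) volume m d := by
    have := (intervalIntegral.intervalIntegrable_rpow' (a := 0) (b := d - m)
      (r := a - 1) (by linarith)).comp_sub_left d
    simpa using this.symm
  apply IntervalIntegrable.trans (b := m)
  · have := h1.continuousOn_mul (g := fun x => (d - x) ^ (a - 1)) ?_
    · simpa [mul_comm] using this
    · apply ContinuousOn.rpow_const
      · fun_prop
      · intro x hx
        rw [uIcc_of_le hcm.le] at hx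
        left; intro h; linarith [hx.2, sub_eq_zero.mp h]
  · apply h2.mul_continuousOn
    apply ContinuousOn.rpow_const
    · fun_prop
    · intro x hx
      rw [uIcc_of_le hmd.le] at hx
      left; intro h; linarith [hx.1, sub_eq_zero.mp h]


lemma real_beta {a b : ℝ} (ha : 0 < a) (hb : 0 < b) :
    ∫ x in (0:ℝ)..1, x ^ (a - 1) * (1 - x) ^ (b - 1)
      = Real.Gamma a * Real.Gamma b / Real.Gamma (a + b) := by
  have key : Complex.betaIntegral a b
      = ((∫ x in (0:ℝ)..1, x ^ (a - 1) * (1 - x) ^ (b - 1) : ℝ) : ℂ) := by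
    rw [Complex.betaIntegral, ← intervalIntegral.integral_ofReal]
    apply intervalIntegral.integral_congr
    intro x hx
    rw [uIcc_of_le zero_le_one] at hx
    simp only []
    rw [Complex.ofReal_mul, Complex.ofReal_cpow hx.1,
      Complex.ofReal_cpow (by linarith [hx.2] : (0:ℝ) ≤ 1 - x)]
    push_cast
    ring
  have h2 := Complex.Gamma_mul_Gamma_eq_betaIntegral
    (s := (a:ℂ)) (t := (b:ℂ)) (by simpa using ha) (by simpa using hb)
  rw [key, ← Complex.ofReal_add, Complex.Gamma_ofReal, Complex.Gamma_ofReal,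
    Complex.Gamma_ofReal, ← Complex.ofReal_mul, ← Complex.ofReal_mul] at h2
  have h3 := Complex.ofReal_injective h2
  have hG : Real.Gamma (a + b) ≠ 0 := (Real.Gamma_pos_of_pos (by linarith)).ne'
  field_simp
  linarith [h3]

lemma shifted_beta {a b c : ℝ} (ha : 0 < a) (hb : 0 < b) (hc : c < 1) :
    ∫ x in c..(1:ℝ), (1 - x) ^ (a - 1) * (x - c) ^ (b - 1)
      = (1 - c) ^ (a + b - 1) * (Real.Gamma a * Real.Gamma b / Real.Gamma (a + b)) := by
  have h1c : (0:ℝ) < 1 - c := by linarith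
  have key := intervalIntegral.integral_comp_mul_add
    (a := (0:ℝ)) (b := 1) (f := fun x => (1 - x) ^ (a - 1) * (x - c) ^ (b - 1))
    (c := 1 - c) h1c.ne' c
  simp only [mul_zero, zero_add, mul_one, sub_add_cancel] at key
  have key2 : ∫ u in (0:ℝ)..1, (1 - ((1 - c) * u + c)) ^ (a - 1) * ((1 - c) * u + c - c) ^ (b - 1)
      = (1 - c) ^ (a - 1) * (1 - c) ^ (b - 1) *
        ∫ u in (0:ℝ)..1, u ^ (b - 1) * (1 - u) ^ (a - 1) := by
    rw [← intervalIntegral.integral_const_mul]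
    apply intervalIntegral.integral_congr
    intro u hu
    rw [uIcc_of_le zero_le_one] at hu
    simp only []
    have h1 : 1 - ((1 - c) * u + c) = (1 - c) * (1 - u) := by ring
    have h2 : (1 - c) * u + c - c = (1 - c) * u := by ring
    rw [h1, h2, Real.mul_rpow h1c.le (by linarith [hu.2]), Real.mul_rpow h1c.le hu.1]
    ring
  rw [key2, real_beta hb ha] at key
  have := key.symm
  rw [smul_eq_mul] at this
  have h2 : (1 - c) * ((1 - c) ^ (a - 1) * (1 - c) ^ (b - 1)) = (1 - c) ^ (b + a - 1) := by
    rw [← Real.rpow_add h1c]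
    nth_rewrite 1 [← Real.rpow_one (1 - c)]
    rw [← Real.rpow_add h1c]
    ring_nf
  field_simp at this ⊢
  rw [add_comm a b, ← h2, this]
  ring

lemma lint_beta {a b c : ℝ} (ha : 0 < a) (hb : 0 < b) (hc : c < 1) :
    ∫⁻ x in Ioo c 1, ENNReal.ofReal ((1 - x) ^ (a - 1) * (x - c) ^ (b - 1))
      = ENNReal.ofReal ((1 - c) ^ (a + b - 1) * (Real.Gamma a * Real.Gamma b / Real.Gamma (a + b))) := by
  have hint : IntegrableOn (fun x => (1 - x) ^ (a - 1) * (x - c) ^ (b - 1)) (Ioo c 1) volume := by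
    have := (beta_intble ha hb hc)
    rw [intervalIntegrable_iff_integrableOn_Ioo_of_le hc.le] at this
    exact this
  rw [← ofReal_integral_eq_lintegral_ofReal hint ?nn]
  case nn =>
    filter_upwards [ae_restrict_mem measurableSet_Ioo] with x hx
    exact mul_nonneg (Real.rpow_nonneg (by linarith [hx.2]) _)
      (Real.rpow_nonneg (by linarith [hx.1]) _)
  congr 1
  rw [← integral_Ioc_eq_integral_Ioo, ← intervalIntegral.integral_of_le hc.le]
  exact shifted_beta ha hb hc

def Simp (n : ℕ) : Set (Fin (n + 1) → ℝ) :=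
  {s | StrictAnti s ∧ ∀ i, s i ∈ Set.Ioo (0 : ℝ) 1}

noncomputable def PG (β : ℝ) {n : ℕ} (t : Fin (n + 1) → ℝ) : ℝ :=
  ∏ i : Fin n, (t i.castSucc - t i.succ) ^ (β - 1)

noncomputable def Ker (β a : ℝ) {n : ℕ} (s : Fin (n + 1) → ℝ) : ℝ :=
  (1 - s 0) ^ (a - 1) * PG β s

lemma measurableSet_Simp (n : ℕ) : MeasurableSet (Simp n) := by
  have h1 : MeasurableSet {s : Fin (n + 1) → ℝ | StrictAnti s} := by
    have : {s : Fin (n + 1) → ℝ | StrictAnti s}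
        = ⋂ (i : Fin (n + 1)) (j : Fin (n + 1)), {s | i < j → s j < s i} := by
      ext s; simp [StrictAnti]
    rw [this]
    refine MeasurableSet.iInter fun i => MeasurableSet.iInter fun j => ?_
    by_cases h : i < j
    · simp only [h, forall_true_left]
      exact measurableSet_lt (measurable_pi_apply j) (measurable_pi_apply i)
    · have : {s : Fin (n + 1) → ℝ | i < j → s j < s i} = univ := by
        ext s; simp [h]
      rw [this]; exact MeasurableSet.univ
  have h2 : MeasurableSet {s : Fin (n + 1) → ℝ | ∀ i, s i ∈ Set.Ioo (0 : ℝ) 1} := by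
    have : {s : Fin (n + 1) → ℝ | ∀ i, s i ∈ Set.Ioo (0 : ℝ) 1}
        = ⋂ i, (fun s : Fin (n + 1) → ℝ => s i) ⁻¹' Set.Ioo 0 1 := by
      ext s; simp
    rw [this]
    exact MeasurableSet.iInter fun i => (measurable_pi_apply i) measurableSet_Ioo
  exact h1.inter h2

lemma measurable_PG (β : ℝ) (n : ℕ) : Measurable (PG β (n := n)) := by
  apply Finset.measurable_prod
  intro i _
  fun_prop

lemma measurable_Ker (β a : ℝ) (n : ℕ) : Measurable (Ker β a (n := n)) := by
  apply Measurable.mul ?_ (measurable_PG β n)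
  fun_prop

lemma cons_mem_Simp {n : ℕ} {x : ℝ} {t : Fin (n + 1) → ℝ} :
    Fin.cons x t ∈ Simp (n + 1) ↔ t ∈ Simp n ∧ x ∈ Set.Ioo (t 0) 1 := by
  simp only [Simp, mem_setOf_eq, Fin.strictAnti_iff_succ_lt]
  constructor
  · rintro ⟨hanti, hmem⟩
    have h0 : t 0 < x := by simpa using hanti 0
    have hx1 : x < 1 := by simpa using (hmem 0).2
    refine ⟨⟨fun j => ?_, fun i => ?_⟩, h0, hx1⟩
    · simpa [Fin.castSucc_succ] using hanti j.succ
    · simpa using hmem i.succ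
  · rintro ⟨⟨hanti, hmem⟩, hx0, hx1⟩
    refine ⟨fun i => ?_, fun i => ?_⟩
    · induction i using Fin.cases with
      | zero => simpa using hx0
      | succ j => simpa [Fin.castSucc_succ] using hanti j
    · induction i using Fin.cases with
      | zero =>
          simp only [Fin.castSucc_zero, Fin.cons_zero]
          exact ⟨lt_trans (hmem 0).1 hx0, hx1⟩
      | succ j => simpa using hmem j

lemma PG_cons (β : ℝ) {n : ℕ} (x : ℝ) (t : Fin (n + 1) → ℝ) :
    PG β (Fin.cons x t) = (x - t 0) ^ (β - 1) * PG β t := by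
  rw [PG, Fin.prod_univ_succ, PG]
  refine congrArg₂ (· * ·) ?_ (Finset.prod_congr rfl fun j _ => ?_)
  · simp
  · rw [← Fin.succ_castSucc]
    simp [Fin.cons_succ]

lemma Ker_cons (β a : ℝ) {n : ℕ} (x : ℝ) (t : Fin (n + 1) → ℝ) :
    Ker β a (Fin.cons x t) = ((1 - x) ^ (a - 1) * (x - t 0) ^ (β - 1)) * PG β t := by
  rw [Ker, PG_cons]
  simp [mul_assoc]

lemma PG_nonneg {β : ℝ} {n : ℕ} {t : Fin (n + 1) → ℝ} (ht : t ∈ Simp n) : 0 ≤ PG β t := by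
  apply Finset.prod_nonneg
  intro i _
  apply Real.rpow_nonneg
  have := ht.1 (Fin.castSucc_lt_succ (i := i))
  linarith

lemma Ker_nonneg {β a : ℝ} {n : ℕ} {t : Fin (n + 1) → ℝ} (ht : t ∈ Simp n) : 0 ≤ Ker β a t :=
  mul_nonneg (Real.rpow_nonneg (by linarith [(ht.2 0).2]) _) (PG_nonneg ht)

lemma main_lintegral {β : ℝ} (hβ : 0 < β) :
    ∀ (n : ℕ) (a : ℝ), 0 < a →
      ∫⁻ s in Simp n, ENNReal.ofReal (Ker β a s)
        = ENNReal.ofReal (Real.Gamma a * Real.Gamma β ^ n / Real.Gamma (a + n * β + 1)) := by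
  intro n
  induction n with
  | zero =>
      intro a ha
      have e := MeasurableEquiv.funUnique (Fin 1) ℝ
      rw [← lintegral_indicator (measurableSet_Simp 0)]
      erw [← ((volume_preserving_funUnique (Fin 1) ℝ).symm
          (MeasurableEquiv.funUnique (Fin 1) ℝ)).lintegral_comp_emb
        (MeasurableEquiv.funUnique (Fin 1) ℝ).symm.measurableEmbedding]
      have heq : ∀ y : ℝ,
          Set.indicator (Simp 0) (fun s => ENNReal.ofReal (Ker β a s))
            ((MeasurableEquiv.funUnique (Fin 1) ℝ).symm y)
          = Set.indicator (Set.Ioo (0:ℝ) 1)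
              (fun y => ENNReal.ofReal ((1 - y) ^ (a - 1) * (y - 0) ^ ((1:ℝ) - 1))) y := by
        intro y
        have hy : ((MeasurableEquiv.funUnique (Fin 1) ℝ).symm y) = fun _ : Fin 1 => y := rfl
        have hmem : ((fun _ : Fin 1 => y) ∈ Simp 0) ↔ y ∈ Set.Ioo (0:ℝ) 1 := by
          constructor
          · intro h; exact h.2 0
          · intro h
            refine ⟨fun i j hij => absurd (show (i:ℕ) < (j:ℕ) from hij) (by omega), fun i => h⟩
        rw [hy]
        by_cases h : y ∈ Set.Ioo (0:ℝ) 1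
        · rw [Set.indicator_of_mem (hmem.mpr h), Set.indicator_of_mem h]
          norm_num [Ker, PG]
        · rw [Set.indicator_of_notMem (fun hh => h (hmem.mp hh)), Set.indicator_of_notMem h]
      simp_rw [heq]
      rw [lintegral_indicator measurableSet_Ioo]
      rw [lint_beta ha one_pos zero_lt_one]
      congr 1
      rw [Real.Gamma_one]
      norm_num [Real.one_rpow]
  | succ n ih =>
      intro a ha
      have hB : (0:ℝ) ≤ Real.Gamma a * Real.Gamma β / Real.Gamma (a + β) :=
        div_nonneg (mul_nonneg (Real.Gamma_pos_of_pos ha).le (Real.Gamma_pos_of_pos hβ).le)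
          (Real.Gamma_pos_of_pos (by linarith)).le
      set e := MeasurableEquiv.piFinSuccAbove (fun _ : Fin (n + 2) => ℝ) 0 with he
      have hsymm : ∀ (x : ℝ) (t : Fin (n + 1) → ℝ), e.symm (x, t) = Fin.cons x t := by
        intro x t
        simp [he, MeasurableEquiv.piFinSuccAbove, Fin.insertNthEquiv, Fin.insertNth_zero']
      rw [← lintegral_indicator (measurableSet_Simp (n + 1))]
      rw [← ((volume_preserving_piFinSuccAbove (fun _ : Fin (n + 2) => ℝ) 0).symm
          e).lintegral_comp_emb e.symm.measurableEmbedding]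
      rw [Measure.volume_eq_prod]
      rw [lintegral_prod_symm (fun p : ℝ × (Fin (n + 1) → ℝ) =>
          (Simp (n + 1)).indicator (fun s => ENNReal.ofReal (Ker β a s)) (e.symm p))
        ((((measurable_Ker β a (n + 1)).ennreal_ofReal).indicator
          (measurableSet_Simp (n + 1))).comp e.symm.measurable).aemeasurable]
      have inner : ∀ t : Fin (n + 1) → ℝ,
          ∫⁻ x, Set.indicator (Simp (n + 1)) (fun s => ENNReal.ofReal (Ker β a s)) (Fin.cons x t)
            = Set.indicator (Simp n) (fun t =>
                ENNReal.ofReal (Real.Gamma a * Real.Gamma β / Real.Gamma (a + β)) *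
                  ENNReal.ofReal (Ker β (a + β) t)) t := by
        intro t
        by_cases ht : t ∈ Simp n
        · rw [Set.indicator_of_mem ht]
          have h1 : ∀ x, Set.indicator (Simp (n + 1))
                (fun s => ENNReal.ofReal (Ker β a s)) (Fin.cons x t)
              = Set.indicator (Set.Ioo (t 0) 1) (fun x =>
                  ENNReal.ofReal ((1 - x) ^ (a - 1) * (x - t 0) ^ (β - 1)) *
                    ENNReal.ofReal (PG β t)) x := by
            intro x
            by_cases hx : x ∈ Set.Ioo (t 0) 1
            · rw [Set.indicator_of_mem (cons_mem_Simp.mpr ⟨ht, hx⟩), Set.indicator_of_mem hx,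
                Ker_cons, ENNReal.ofReal_mul' (PG_nonneg ht)]
            · rw [Set.indicator_of_notMem (fun hh => hx (cons_mem_Simp.mp hh).2),
                Set.indicator_of_notMem hx]
          simp_rw [h1]
          rw [lintegral_indicator measurableSet_Ioo]
          rw [lintegral_mul_const _ (by fun_prop)]
          rw [lint_beta ha hβ (ht.2 0).2]
          rw [← ENNReal.ofReal_mul' (PG_nonneg ht), mul_comm ((1 - t 0) ^ (a + β - 1))
            (Real.Gamma a * Real.Gamma β / Real.Gamma (a + β)), mul_assoc,
            ENNReal.ofReal_mul hB]
          congr 2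
        · rw [Set.indicator_of_notMem ht]
          have h0 : ∀ x, Set.indicator (Simp (n + 1))
              (fun s => ENNReal.ofReal (Ker β a s)) (Fin.cons x t) = 0 := fun x =>
            Set.indicator_of_notMem (fun hh => ht (cons_mem_Simp.mp hh).1) _
          simp_rw [h0, lintegral_zero]
      simp_rw [hsymm, inner]
      rw [lintegral_indicator (measurableSet_Simp n)]
      rw [lintegral_const_mul _ (measurable_Ker β (a + β) n).ennreal_ofReal]
      rw [ih (a + β) (by linarith)]
      rw [← ENNReal.ofReal_mul hB]
      congr 1
      have hargs : a + β + ↑n * β + 1 = a + ↑(n + 1) * β + 1 := by push_cast; ring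
      have hG : Real.Gamma (a + β) ≠ 0 := (Real.Gamma_pos_of_pos (by linarith)).ne'
      have hG2 : Real.Gamma (a + ↑(n + 1) * β + 1) ≠ 0 :=
        (Real.Gamma_pos_of_pos (by positivity)).ne'
      rw [← hargs] at hG2 ⊢
      field_simp
      ring


lemma singularKernel_eq (β : ℝ) {n : ℕ} (s : Fin (n + 1) → ℝ) :
    singularKernel β s = Ker β β s := by
  rw [singularKernel, Ker, PG, Fin.prod_univ_succ]
  refine congrArg₂ (· * ·) ?_ (Finset.prod_congr rfl fun i _ => ?_)
  · norm_num [neg_sub]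
  · rw [dif_neg (by simp)]
    have hidx : (⟨((i.succ : Fin (n + 1)) : ℕ) - 1,
        by have := (i.succ : Fin (n + 1)).isLt; omega⟩ : Fin (n + 1)) = i.castSucc :=
      Fin.ext (by simp)
    rw [hidx, neg_sub]

end PolyBeta

/-- `h_α(s) = R_{α,n}(s)/W_n(β)` with `W_n(β) = Γ(β)^n/Γ(1+nβ)` is a probability
density on the simplex `S(n)`: it is nonnegative there and integrates to `1`. -/
theorem polygonal_beta_density (n : ℕ) (β : ℝ) (hβ : β ∈ Set.Ioo (0 : ℝ) 1) :
    (∀ s ∈ {s : Fin (n + 1) → ℝ | StrictAnti s ∧ ∀ i, s i ∈ Set.Ioo (0 : ℝ) 1},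
      0 ≤ singularKernel β s / (Real.Gamma β ^ (n + 1) / Real.Gamma (1 + (n + 1) * β))) ∧
    (∫ s in {s : Fin (n + 1) → ℝ | StrictAnti s ∧ ∀ i, s i ∈ Set.Ioo (0 : ℝ) 1},
        singularKernel β s / (Real.Gamma β ^ (n + 1) / Real.Gamma (1 + (n + 1) * β)))
      = 1 := by
  obtain ⟨hβ0, hβ1⟩ := hβ
  have hSet : {s : Fin (n + 1) → ℝ | StrictAnti s ∧ ∀ i, s i ∈ Set.Ioo (0 : ℝ) 1}
      = PolyBeta.Simp n := rfl
  have hGβ : 0 < Real.Gamma β := Real.Gamma_pos_of_pos hβ0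
  have hGd : 0 < Real.Gamma (1 + (n + 1) * β) := Real.Gamma_pos_of_pos (by positivity)
  have hW : 0 < Real.Gamma β ^ (n + 1) / Real.Gamma (1 + (n + 1) * β) :=
    div_pos (pow_pos hGβ _) hGd
  constructor
  · intro s hs
    rw [hSet] at hs
    exact div_nonneg (by rw [PolyBeta.singularKernel_eq]; exact PolyBeta.Ker_nonneg hs) hW.le
  · rw [hSet]
    simp_rw [PolyBeta.singularKernel_eq, div_eq_mul_inv, integral_mul_const]
    have hnn : 0 ≤ᵐ[volume.restrict (PolyBeta.Simp n)] fun s => PolyBeta.Ker β β s :=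
      (ae_restrict_iff' (PolyBeta.measurableSet_Simp n)).mpr
        (Filter.Eventually.of_forall fun s hs => PolyBeta.Ker_nonneg hs)
    rw [integral_eq_lintegral_of_nonneg_ae hnn
      (PolyBeta.measurable_Ker β β n).aestronglyMeasurable]
    rw [PolyBeta.main_lintegral hβ0 n β hβ0]
    have hV : (0:ℝ) ≤ Real.Gamma β * Real.Gamma β ^ n / Real.Gamma (β + ↑n * β + 1) :=
      div_nonneg (by positivity) (Real.Gamma_pos_of_pos (by positivity)).le
    rw [ENNReal.toReal_ofReal hV]
    have harg : β + ↑n * β + 1 = 1 + (↑n + 1) * β := by ring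
    rw [harg]
    have hpow : Real.Gamma β * Real.Gamma β ^ n = Real.Gamma β ^ (n + 1) := by
      rw [pow_succ]; ring
    rw [hpow]
    rw [mul_inv_eq_one₀ ?h]
    case h =>
      exact (div_pos (pow_pos hGβ _) (Real.Gamma_pos_of_pos (by positivity))).ne'
    rfl
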